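/- Let Δ₁, Δ₂ be real numbers (or integers) with Δ₂ ≥ 2 and Δ₁ ≥ 2Δ₂ + 3, and let L₈ be the symmetric 4×4 matrix with rows (Δ₁, -1, 0, 0), (-1, Δ₂, -1, -1), (0, -1, Δ₂-1, -1), (0, -1, -1, Δ₂-1), and let L₉ be the symmetric 4×4 matrix with rows (Δ₁, -1, 0, 0), (-1, Δ₂, -1, -1), (0, -1, Δ₂-1, 0), (0, -1, 0, Δ₂-1). Then the second largest eigenvalues of L₈ and of L₉ are each strictly greater than Δ₂ + 1/2. -/

import Mathlib

open Finset

/-- The `k`-th largest element (1-indexed) of a multiset of reals, with default `0`. -/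
noncomputable def kthLargestR (s : Multiset ℝ) (k : ℕ) : ℝ :=
  (s.sort (· ≤ ·)).reverse.getD (k - 1) 0

/-- The second largest eigenvalue (i.e. second largest root, with multiplicity, of the
characteristic polynomial) of a square real matrix. -/
noncomputable def secondLargestEig {k : ℕ} (M : Matrix (Fin k) (Fin k) ℝ) : ℝ :=
  kthLargestR M.charpoly.roots 2

open Polynomial Matrix

lemma filter_two_kth' {s : Multiset ℝ} {c : ℝ}
    (h : 2 ≤ Multiset.card (s.filter (fun x => c < x))) :
    c < kthLargestR s 2 := by
  classical
  show c < (s.sort (· ≤ ·)).reverse.getD (2 - 1) 0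
  set l := s.sort (· ≤ ·) with hl
  have hsort : l.Pairwise (· ≤ ·) := s.pairwise_sort _
  have hse : (l : Multiset ℝ) = s := s.sort_eq _
  have hcount : 2 ≤ l.countP (fun x => decide (c < x)) := by
    have h2 : s.filter (fun x => c < x)
        = ((l.filter (fun x => decide (c < x)) : List ℝ) : Multiset ℝ) := by
      rw [← hse, Multiset.filter_coe]
    rw [h2] at h
    simpa [List.countP_eq_length_filter] using h
  have hcr : 2 ≤ l.reverse.countP (fun x => decide (c < x)) := by
    rwa [List.countP_reverse]
  have hrev : l.reverse.Pairwise (fun a b => b ≤ a) := by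
    rw [List.pairwise_reverse]; exact hsort
  rcases hr : l.reverse with _ | ⟨a, _ | ⟨b, t⟩⟩
  · rw [hr] at hcr; simp at hcr
  · rw [hr] at hcr; simp [List.countP_cons] at hcr; split at hcr <;> omega
  · simp only [List.getD]
    by_contra hbc
    push_neg at hbc
    rw [hr] at hcr hrev
    have hbt : ∀ x ∈ (b :: t), x ≤ c := by
      intro x hx
      rcases List.mem_cons.1 hx with rfl | hx
      · exact hbc
      · exact le_trans ((List.pairwise_cons.1 (List.pairwise_cons.1 hrev).2).1 x hx) hbc
    have h0 : (b :: t).countP (fun x => decide (c < x)) = 0 := by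
      rw [List.countP_eq_zero]
      intro x hx
      simpa using not_lt.2 (hbt x hx)
    rw [List.countP_cons, h0] at hcr
    split at hcr <;> omega

lemma eval_charpoly4 (M : Matrix (Fin 4) (Fin 4) ℝ) (t : ℝ) :
    M.charpoly.eval t = (t • (1 : Matrix (Fin 4) (Fin 4) ℝ) - M).det := by
  rw [Matrix.charpoly, _root_.eval_det, _root_.matPolyEquiv_eval_eq_map]
  congr 1
  ext i j
  by_cases h : i = j <;>
    simp [Matrix.charmatrix_apply, h, Matrix.one_apply, Matrix.smul_apply, Matrix.sub_apply]

lemma two_roots_card {p : Polynomial ℝ} (hp : p ≠ 0) {c t u : ℝ} (hct : c < t) (htu : t < u)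
    (h1 : 0 < p.eval c) (h2 : p.eval t < 0) (h3 : 0 < p.eval u) :
    2 ≤ Multiset.card (p.roots.filter (fun x => c < x)) := by
  have hcont : ContinuousOn (fun x => p.eval x) (Set.Icc c t) := (p.continuous).continuousOn
  have hcont2 : ContinuousOn (fun x => p.eval x) (Set.Icc t u) := (p.continuous).continuousOn
  obtain ⟨r1, hr1, hr1e⟩ := intermediate_value_Ioo' hct.le hcont ⟨h2, h1⟩
  obtain ⟨r2, hr2, hr2e⟩ := intermediate_value_Ioo htu.le hcont2 ⟨h2, h3⟩
  have hm1 : r1 ∈ p.roots.filter (fun x => c < x) :=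
    Multiset.mem_filter.2 ⟨(Polynomial.mem_roots hp).2 hr1e, hr1.1⟩
  have hm2 : r2 ∈ p.roots.filter (fun x => c < x) :=
    Multiset.mem_filter.2 ⟨(Polynomial.mem_roots hp).2 hr2e, hct.trans hr2.1⟩
  have hne : r2 ≠ r1 := ne_of_gt (hr1.2.trans hr2.1)
  have hm2' : r2 ∈ (p.roots.filter (fun x => c < x)).erase r1 :=
    (Multiset.mem_erase_of_ne hne).2 hm2
  have hc1 : 0 < Multiset.card ((p.roots.filter (fun x => c < x)).erase r1) :=
    Multiset.card_pos.2 (fun h0 => by simp [h0] at hm2')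
  have := Multiset.card_erase_add_one hm1
  omega

lemma second_largest_lower {M : Matrix (Fin 4) (Fin 4) ℝ} {c t u : ℝ} (hct : c < t) (htu : t < u)
    (h1 : 0 < M.charpoly.eval c) (h2 : M.charpoly.eval t < 0) (h3 : 0 < M.charpoly.eval u) :
    c < secondLargestEig M :=
  filter_two_kth' (two_roots_card (M.charpoly_monic).ne_zero hct htu h1 h2 h3)

lemma evalL8 (Δ₁ Δ₂ x : ℝ) :
    (!![Δ₁, -1, 0, 0; -1, Δ₂, -1, -1; 0, -1, Δ₂ - 1, -1;
        0, -1, -1, Δ₂ - 1] : Matrix (Fin 4) (Fin 4) ℝ).charpoly.eval x =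
      (-2)*x^1 + (-3)*x^2 + (2)*x^3 + (1)*x^4 + (2)*Δ₂^1 + (4)*Δ₂^1*x^1 + (-4)*Δ₂^1*x^2 + (-3)*Δ₂^1*x^3 + (-1)*Δ₂^2 + (2)*Δ₂^2*x^1 + (3)*Δ₂^2*x^2 + (-1)*Δ₂^3*x^1 + (2)*Δ₁^1*x^1 + (-2)*Δ₁^1*x^2 + (-1)*Δ₁^1*x^3 + (-2)*Δ₁^1*Δ₂^1 + (4)*Δ₁^1*Δ₂^1*x^1 + (3)*Δ₁^1*Δ₂^1*x^2 + (-2)*Δ₁^1*Δ₂^2 + (-3)*Δ₁^1*Δ₂^2*x^1 + (1)*Δ₁^1*Δ₂^3 := by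
  rw [eval_charpoly4]
  have h : x • (1 : Matrix (Fin 4) (Fin 4) ℝ) -
      !![Δ₁, -1, 0, 0; -1, Δ₂, -1, -1; 0, -1, Δ₂ - 1, -1; 0, -1, -1, Δ₂ - 1] =
      !![x - Δ₁, 1, 0, 0; 1, x - Δ₂, 1, 1; 0, 1, x - (Δ₂ - 1), 1; 0, 1, 1, x - (Δ₂ - 1)] := by
    ext i j
    fin_cases i <;> fin_cases j <;>
      simp [Matrix.sub_apply, Matrix.smul_apply, Matrix.one_apply, Matrix.vecHead, Matrix.vecTail]
  rw [h]
  simp [Matrix.det_succ_row_zero, Fin.sum_univ_succ, Fin.succAbove]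
  ring

lemma evalL9 (Δ₁ Δ₂ x : ℝ) :
    (!![Δ₁, -1, 0, 0; -1, Δ₂, -1, -1; 0, -1, Δ₂ - 1, 0;
        0, -1, 0, Δ₂ - 1] : Matrix (Fin 4) (Fin 4) ℝ).charpoly.eval x =
      (-1) + (-4)*x^1 + (-2)*x^2 + (2)*x^3 + (1)*x^4 + (2)*Δ₂^1 + (3)*Δ₂^1*x^1 + (-4)*Δ₂^1*x^2 + (-3)*Δ₂^1*x^3 + (-1)*Δ₂^2 + (2)*Δ₂^2*x^1 + (3)*Δ₂^2*x^2 + (-1)*Δ₂^3*x^1 + (2)*Δ₁^1 + (1)*Δ₁^1*x^1 + (-2)*Δ₁^1*x^2 + (-1)*Δ₁^1*x^3 + (-1)*Δ₁^1*Δ₂^1 + (4)*Δ₁^1*Δ₂^1*x^1 + (3)*Δ₁^1*Δ₂^1*x^2 + (-2)*Δ₁^1*Δ₂^2 + (-3)*Δ₁^1*Δ₂^2*x^1 + (1)*Δ₁^1*Δ₂^3 := by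
  rw [eval_charpoly4]
  have h : x • (1 : Matrix (Fin 4) (Fin 4) ℝ) -
      !![Δ₁, -1, 0, 0; -1, Δ₂, -1, -1; 0, -1, Δ₂ - 1, 0; 0, -1, 0, Δ₂ - 1] =
      !![x - Δ₁, 1, 0, 0; 1, x - Δ₂, 1, 1; 0, 1, x - (Δ₂ - 1), 0; 0, 1, 0, x - (Δ₂ - 1)] := by
    ext i j
    fin_cases i <;> fin_cases j <;>
      simp [Matrix.sub_apply, Matrix.smul_apply, Matrix.one_apply, Matrix.vecHead, Matrix.vecTail]
  rw [h]
  simp [Matrix.det_succ_row_zero, Fin.sum_univ_succ, Fin.succAbove]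
  ring

/-- For reals `Δ₂ ≥ 2` and `Δ₁ ≥ 2Δ₂ + 3`, the second largest eigenvalues
of the matrices `L₈` and `L₉` are each strictly greater than `Δ₂ + 1/2`. -/
theorem stmt18 (Δ₁ Δ₂ : ℝ) (h₂ : 2 ≤ Δ₂) (h₁ : 2 * Δ₂ + 3 ≤ Δ₁) :
    secondLargestEig !![Δ₁, -1, 0, 0;
                        -1, Δ₂, -1, -1;
                        0, -1, Δ₂ - 1, -1;
                        0, -1, -1, Δ₂ - 1] > Δ₂ + 1 / 2 ∧
      secondLargestEig !![Δ₁, -1, 0, 0;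
                          -1, Δ₂, -1, -1;
                          0, -1, Δ₂ - 1, 0;
                          0, -1, 0, Δ₂ - 1] > Δ₂ + 1 / 2 := by
  have he : (0:ℝ) ≤ Δ₁ - 2*Δ₂ - 3 := by linarith
  have hf : (0:ℝ) ≤ Δ₂ - 2 := by linarith
  constructor
  · refine second_largest_lower (c := Δ₂ + 1/2) (t := Δ₂ + 2) (u := Δ₁ + 1)
      (by linarith) (by linarith) ?_ ?_ ?_
    · rw [evalL8]; nlinarith [sq_nonneg Δ₂, sq_nonneg Δ₁]
    · rw [evalL8]; nlinarith [sq_nonneg Δ₂, sq_nonneg Δ₁]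
    · rw [evalL8]
      nlinarith [mul_nonneg he hf, mul_nonneg he he, mul_nonneg hf hf,
        mul_nonneg (mul_nonneg he he) he, mul_nonneg (mul_nonneg he he) hf,
        mul_nonneg (mul_nonneg he hf) hf, mul_nonneg (mul_nonneg hf hf) hf]
  · refine second_largest_lower (c := Δ₂ + 1/2) (t := Δ₂ + 2) (u := Δ₁ + 1)
      (by linarith) (by linarith) ?_ ?_ ?_
    · rw [evalL9]; nlinarith [sq_nonneg Δ₂, sq_nonneg Δ₁]
    · rw [evalL9]; nlinarith [sq_nonneg Δ₂, sq_nonneg Δ₁]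
    · rw [evalL9]
      nlinarith [mul_nonneg he hf, mul_nonneg he he, mul_nonneg hf hf,
        mul_nonneg (mul_nonneg he he) he, mul_nonneg (mul_nonneg he he) hf,
        mul_nonneg (mul_nonneg he hf) hf, mul_nonneg (mul_nonneg hf hf) hf]
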